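/- No gate CZ_T can be expressed as a product of gates CZ_S with S ≠ T: if ∏_{S ∈ 𝒜} CZ_S = CZ_T for a finite set 𝒜 of nonempty subsets of Fin n, then 𝒜 = {T}. -/

import Mathlib

open scoped symmDiff

/-- The multiple-controlled `Z` gate on the set `S` of qubits. -/
def CZ {n : ℕ} (S : Finset (Fin n)) : Matrix (Fin n → Bool) (Fin n → Bool) ℂ :=
  Matrix.diagonal (fun x => if ∀ j ∈ S, x j = true then -1 else 1)

/-- Any two multiple-controlled `Z` gates commute. -/
theorem CZ_commute {n : ℕ} (S T : Finset (Fin n)) : Commute (CZ S) (CZ T) := by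
  unfold CZ
  simp only [Commute, SemiconjBy, Matrix.diagonal_mul_diagonal, mul_comm]

/-- Linear independence of AND monomials: if every point sees an even number of
members of `ℬ` "fully on", then `ℬ` is empty. -/
lemma CZ_family_empty {n : ℕ} (ℬ : Finset (Finset (Fin n)))
    (h : ∀ x : Fin n → Bool, Even ((ℬ.filter (fun S => ∀ j ∈ S, x j = true)).card)) :
    ℬ = ∅ := by
  by_contra hne
  obtain ⟨S₀, hS₀, hmin⟩ := Finset.exists_min_image ℬ Finset.card
    (Finset.nonempty_iff_ne_empty.mpr hne)
  have hfil : ℬ.filter (fun S => ∀ j ∈ S, (fun j => decide (j ∈ S₀)) j = true) = {S₀} := by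
    ext S
    simp only [Finset.mem_filter, Finset.mem_singleton, decide_eq_true_eq]
    constructor
    · rintro ⟨hS, hsub⟩
      exact Finset.eq_of_subset_of_card_le (fun j hj => hsub j hj) (hmin S hS)
    · rintro rfl
      exact ⟨hS₀, fun j hj => hj⟩
  have := h (fun j => decide (j ∈ S₀))
  rw [hfil] at this
  simp at this

lemma noncommProd_CZ {n : ℕ} (𝒜 : Finset {S : Finset (Fin n) // S.Nonempty}) :
    𝒜.noncommProd (fun S => CZ S.1) (fun S _ T _ _ => CZ_commute S.1 T.1) =
      Matrix.diagonal (fun x => ∏ S ∈ 𝒜, if ∀ j ∈ S.1, x j = true then (-1 : ℂ) else 1) := by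
  classical
  induction 𝒜 using Finset.induction_on with
  | empty => 
    simp only [Finset.prod_empty, Matrix.diagonal_one]
    exact Finset.noncommProd_empty _ _
  | @insert a s ha ih =>
    refine (Finset.noncommProd_insert_of_notMem s a _
      (fun S _ T _ _ => CZ_commute S.1 T.1) ha).trans ?_
    rw [ih]
    unfold CZ
    rw [Matrix.diagonal_mul_diagonal]
    simp only [Finset.prod_insert ha]

lemma even_card_symmDiff_iff {α : Type*} [DecidableEq α] (s t : Finset α) :
    Even ((s ∆ t).card) ↔ Even (s.card + t.card) := by
  have h1 : (s \ t).card + (s ∩ t).card = s.card := Finset.card_sdiff_add_card_inter s t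
  have h2 : (t \ s).card + (t ∩ s).card = t.card := Finset.card_sdiff_add_card_inter t s
  have h3 : (s ∆ t).card = (s \ t).card + (t \ s).card := by
    rw [symmDiff_def, Finset.sup_eq_union, Finset.card_union_of_disjoint disjoint_sdiff_sdiff]
  have h4 : (s ∩ t).card = (t ∩ s).card := by rw [Finset.inter_comm]
  simp only [Nat.even_iff] at *
  omega

/-- No gate `CZ T` can be expressed as a product of gates `CZ S` with `S ≠ T`: if a
product of `CZ` gates over a set `𝒜` of nonempty subsets equals `CZ T`, then
`𝒜 = {T}`. -/
theorem prod_CZ_eq_CZ {n : ℕ} (T : Finset (Fin n)) (hT : T.Nonempty)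
    (𝒜 : Finset {S : Finset (Fin n) // S.Nonempty})
    (h : 𝒜.noncommProd (fun S => CZ S.1) (fun S _ T _ _ => CZ_commute S.1 T.1) = CZ T) :
    𝒜 = {⟨T, hT⟩} := by
  classical
  rw [noncommProd_CZ] at h
  unfold CZ at h
  rw [Matrix.diagonal_eq_diagonal_iff] at h
  -- translate to parity statement
  set 𝒜' : Finset (Finset (Fin n)) := 𝒜.image Subtype.val with h𝒜'
  have key : ∀ x : Fin n → Bool,
      Even ((𝒜'.filter (fun S => ∀ j ∈ S, x j = true)).card
        + (({T} : Finset (Finset (Fin n))).filter (fun S => ∀ j ∈ S, x j = true)).card) := by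
    intro x
    set P : Finset (Fin n) → Prop := fun S => ∀ j ∈ S, x j = true with hP
    have hx := h x
    have hprod : ∀ (𝒞 : Finset {S : Finset (Fin n) // S.Nonempty}),
        (∏ S ∈ 𝒞, if P S.1 then (-1 : ℂ) else 1)
          = (-1 : ℂ) ^ ((𝒞.filter (fun S => P S.1)).card) := by
      intro 𝒞
      induction 𝒞 using Finset.induction_on with
      | empty => simp
      | @insert a s ha ih =>
        rw [Finset.prod_insert ha, ih, Finset.filter_insert]
        by_cases hPa : P a.1
        · rw [if_pos hPa, if_pos hPa,
            Finset.card_insert_of_notMem (fun hc => ha (Finset.mem_of_mem_filter a hc)),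
            pow_succ]
          ring
        · rw [if_neg hPa, if_neg hPa, one_mul]
    rw [hprod] at hx
    have hT1 : (if P T then (-1 : ℂ) else 1)
        = (-1 : ℂ) ^ ((({T} : Finset (Finset (Fin n))).filter (fun S => P S)).card) := by
      rw [Finset.filter_singleton]
      by_cases hPT : P T
      · rw [if_pos hPT, if_pos hPT, Finset.card_singleton, pow_one]
      · rw [if_neg hPT, if_neg hPT, Finset.card_empty, pow_zero]
    rw [hT1] at hx
    set a := ((𝒜.filter (fun S => P S.1)).card)
    set b := ((({T} : Finset (Finset (Fin n))).filter (fun S => P S)).card)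
    have hone : ((-1 : ℂ)) ^ (a + b) = 1 := by
      rw [pow_add, hx, ← pow_add, ← two_mul, pow_mul]
      norm_num
    have heven : Even (a + b) := by
      by_contra hodd
      rw [Nat.not_even_iff_odd] at hodd
      rw [hodd.neg_one_pow] at hone
      norm_num at hone
    have hcard : (𝒜'.filter (fun S => P S)).card = a := by
      rw [h𝒜', Finset.filter_image, Finset.card_image_of_injective _ Subtype.val_injective]
    rwa [hcard]
  have hempty : 𝒜' ∆ ({T} : Finset (Finset (Fin n))) = ∅ := by
    apply CZ_family_empty
    intro x
    have hfs : (𝒜' ∆ ({T} : Finset (Finset (Fin n)))).filter (fun S => ∀ j ∈ S, x j = true)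
        = (𝒜'.filter (fun S => ∀ j ∈ S, x j = true))
          ∆ (({T} : Finset (Finset (Fin n))).filter (fun S => ∀ j ∈ S, x j = true)) := by
      ext S
      simp only [Finset.mem_symmDiff, Finset.mem_filter]
      tauto
    rw [hfs, even_card_symmDiff_iff]
    exact key x
  have h𝒜T : 𝒜' = {T} := Finset.symmDiff_eq_empty.mp hempty
  apply Finset.image_injective (f := (Subtype.val : {S : Finset (Fin n) // S.Nonempty} → _))
    Subtype.val_injective
  rw [← h𝒜', h𝒜T, Finset.image_singleton]
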